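/- For the sequences f, g of Proposition fg2 (f(1)=0, f(2)=f(3)=1, g(1)=g(2)=1, g(3)=2, f(n)=g(n-g(n-1)), g(n)=f(n-f(n))+2 for n ≥ 4): for all n ≥ 4, f(n) ≤ n and g(n) ≤ n, and both sequences are unbounded with f(n) → ∞ and g(n) → ∞. -/

import Mathlib

open Filter

lemma stmt_18_key (f g : ℕ → ℕ)
    (hf1 : f 1 = 0) (hf2 : f 2 = 1) (hf3 : f 3 = 1)
    (hg1 : g 1 = 1) (hg2 : g 2 = 1) (hg3 : g 3 = 2)
    (hf : ∀ n, 4 ≤ n → f n = g (n - g (n - 1)))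
    (hg : ∀ n, 4 ≤ n → g n = f (n - f n) + 2) :
    ∀ n, 1 ≤ n → (1 ≤ g n ∧ g n ≤ n ∧ f n < n ∧
      f n ≤ f (n+1) ∧ f (n+1) ≤ f n + 1 ∧ g n ≤ g (n+1) ∧ g (n+1) ≤ g n + 1) := by
  have hf4 : f 4 = 1 := by rw [hf 4 (by norm_num)]; norm_num [hg3, hg2]
  have hg4 : g 4 = 3 := by rw [hg 4 (by norm_num), hf4]; norm_num [hf3]
  have hf5 : f 5 = 1 := by rw [hf 5 (by norm_num)]; norm_num [hg4, hg2]
  have hg5 : g 5 = 3 := by rw [hg 5 (by norm_num), hf5]; norm_num [hf4]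
  intro n
  induction n using Nat.strong_induction_on with
  | _ n IH =>
    intro hn
    rcases lt_or_ge n 5 with h5 | h5
    · interval_cases n <;> simp [hf1, hf2, hf3, hf4, hf5, hg1, hg2, hg3, hg4, hg5]
    · -- step: n ≥ 5
      obtain ⟨m, rfl⟩ : ∃ m, n = m + 1 := ⟨n - 1, by omega⟩
      have hm1 : 1 ≤ m := by omega
      obtain ⟨Am, Bm, Cm, Dm1, Dm2, Em1, Em2⟩ := IH m (by omega) hm1
      set n := m + 1 with hn'
      have hfn : f n = g (n - g m) := by
        have := hf n (by omega)
        simpa [hn'] using this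
      have hgn : g n = f (n - f n) + 2 := hg n (by omega)
      have hfn1 : f (n+1) = g (n + 1 - g n) := by
        have := hf (n+1) (by omega)
        simpa using this
      have hgn1 : g (n+1) = f (n + 1 - f (n+1)) + 2 := hg (n+1) (by omega)
      have hA : 1 ≤ g n := by omega
      have hB : g n ≤ n := by omega
      have hC : f n < n := by omega
      -- D part
      have hD1 : f n ≤ f (n+1) ∧ f (n+1) ≤ f n + 1 := by
        set a := n - g m with ha
        have ha1 : 1 ≤ a := by omega
        have han : a < n := by omega
        obtain ⟨-, -, -, -, -, Ea1, Ea2⟩ := IH a han ha1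
        rcases eq_or_lt_of_le Em1 with hcase | hcase
        · -- g n = g m
          have : n + 1 - g n = a + 1 := by omega
          rw [hfn1, this, hfn]
          exact ⟨Ea1, Ea2⟩
        · -- g n = g m + 1
          have hgeq : g n = g m + 1 := by omega
          have : n + 1 - g n = a := by omega
          rw [hfn1, this, hfn]
          omega
      obtain ⟨hD1a, hD1b⟩ := hD1
      -- E part
      have hE : g n ≤ g (n+1) ∧ g (n+1) ≤ g n + 1 := by
        set b := n - f n with hb
        have hb1 : 1 ≤ b := by omega
        have hbn : b ≤ n := by omega
        have Db : f b ≤ f (b+1) ∧ f (b+1) ≤ f b + 1 := by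
          rcases eq_or_lt_of_le hbn with hcase | hcase
          · rw [hcase]; exact ⟨hD1a, hD1b⟩
          · obtain ⟨-, -, -, D1, D2, -, -⟩ := IH b hcase hb1
            exact ⟨D1, D2⟩
        rcases eq_or_lt_of_le hD1a with hcase | hcase
        · -- f (n+1) = f n
          have : n + 1 - f (n+1) = b + 1 := by omega
          rw [hgn1, this, hgn]
          omega
        · -- f (n+1) = f n + 1
          have hfeq : f (n+1) = f n + 1 := by omega
          have : n + 1 - f (n+1) = b := by omega
          rw [hgn1, this, hgn]
          omega
      exact ⟨hA, hB, hC, hD1a, hD1b, hE.1, hE.2⟩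

/-- For the Golomb-like system with f(1)=0, f(2)=f(3)=1, g(1)=g(2)=1, g(3)=2,
f(n)=g(n-g(n-1)), g(n)=f(n-f(n))+2 for n ≥ 4: f(n) ≤ n and g(n) ≤ n for n ≥ 4,
and both sequences tend to infinity. -/
theorem stmt_18 (f g : ℕ → ℕ)
    (hf1 : f 1 = 0) (hf2 : f 2 = 1) (hf3 : f 3 = 1)
    (hg1 : g 1 = 1) (hg2 : g 2 = 1) (hg3 : g 3 = 2)
    (hf : ∀ n, 4 ≤ n → f n = g (n - g (n - 1)))
    (hg : ∀ n, 4 ≤ n → g n = f (n - f n) + 2) :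
    (∀ n, 4 ≤ n → f n ≤ n ∧ g n ≤ n) ∧
    Tendsto f atTop atTop ∧ Tendsto g atTop atTop := by
  have key := stmt_18_key f g hf1 hf2 hf3 hg1 hg2 hg3 hf hg
  -- monotonicity on [1, ∞)
  have monoF : ∀ p q, 1 ≤ p → p ≤ q → f p ≤ f q := by
    intro p q hp hpq
    induction q, hpq using Nat.le_induction with
    | base => exact le_rfl
    | succ q hq ih =>
      exact le_trans ih ((key q (by omega)).2.2.2.1)
  have monoG : ∀ p q, 1 ≤ p → p ≤ q → g p ≤ g q := by
    intro p q hp hpq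
    induction q, hpq using Nat.le_induction with
    | base => exact le_rfl
    | succ q hq ih =>
      exact le_trans ih ((key q (by omega)).2.2.2.2.2.1)
  -- g is unbounded
  have gub : ∀ C, ∃ n, 1 ≤ n ∧ C < g n := by
    intro C
    by_contra h
    push_neg at h
    have hC : ∀ n, 1 ≤ n → g n ≤ C := fun n hn => h n hn
    have hCf : ∀ n, 1 ≤ n → f n ≤ C := by
      intro n hn
      have hC1 : 1 ≤ C := hg1 ▸ hC 1 le_rfl
      rcases lt_or_ge n 4 with h4 | h4
      · interval_cases n <;> omega
      · rw [hf n h4]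
        have h1 := key (n - 1) (by omega)
        exact hC _ (by omega)
    -- g is eventually constant
    set S : Set ℕ := Set.range (fun k => g (k + 1)) with hS
    have hSne : S.Nonempty := ⟨g 1, 0, rfl⟩
    have hSbdd : BddAbove S := ⟨C, by rintro x ⟨k, rfl⟩; exact hC (k+1) (by omega)⟩
    obtain ⟨N, hN⟩ := Nat.sSup_mem hSne hSbdd
    set v := sSup S with hv
    have hvmax : ∀ k, g (k + 1) ≤ v := fun k => le_csSup hSbdd ⟨k, rfl⟩
    have gconst : ∀ n, N + 1 ≤ n → g n = v := by
      intro n hn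
      refine le_antisymm ?_ ?_
      · have := hvmax (n - 1)
        have hn1 : n - 1 + 1 = n := by omega
        rwa [hn1] at this
      · rw [← hN]; exact monoG (N+1) n (by omega) hn
    have fconst : ∀ n, N + C + 5 ≤ n → f n = v := by
      intro n hn
      have hgC : g (n - 1) ≤ C := hC (n-1) (by omega)
      rw [hf n (by omega)]
      exact gconst _ (by omega)
    set n₀ := N + 2*C + 10 with hn₀
    have h1 : g n₀ = v := gconst n₀ (by omega)
    have h2 : f n₀ ≤ C := hCf n₀ (by omega)
    have h3 : g n₀ = f (n₀ - f n₀) + 2 := hg n₀ (by omega)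
    have h4 : f (n₀ - f n₀) = v := fconst _ (by omega)
    omega
  -- f is unbounded
  have fub : ∀ C, ∃ n, 1 ≤ n ∧ C < f n := by
    intro C
    obtain ⟨n, hn1, hn2⟩ := gub (C + 2)
    have h4 : 4 ≤ n := by
      by_contra h4
      interval_cases n <;> omega
    have hgn := hg n h4
    have hfn : f n < n := (key n (by omega)).2.2.1
    exact ⟨n - f n, by omega, by omega⟩
  constructor
  · intro n hn
    have h := key n (by omega)
    exact ⟨le_of_lt h.2.2.1, h.2.1⟩
  constructor
  · rw [tendsto_atTop_atTop]
    intro b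
    obtain ⟨n, hn1, hn2⟩ := fub b
    exact ⟨n, fun m hm => le_trans hn2.le (monoF n m hn1 hm)⟩
  · rw [tendsto_atTop_atTop]
    intro b
    obtain ⟨n, hn1, hn2⟩ := gub b
    exact ⟨n, fun m hm => le_trans hn2.le (monoG n m hn1 hm)⟩
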